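/- Let p ≥ 5 be prime and τ = (1 2 … p) a p-cycle in A_p. There exists β ∈ A_p of order (p-1)/2 normalizing ⟨τ⟩ such that N_{A_p}(⟨τ⟩) = ⟨τ⟩ ⋊ ⟨β⟩, i.e. N_{A_p}(⟨τ⟩) is generated by τ and β, ⟨τ⟩ ∩ ⟨β⟩ = 1, and ⟨τ⟩ is normal in N_{A_p}(⟨τ⟩). -/

import Mathlib

/-- For a prime `p ≥ 5` and a `p`-cycle `τ ∈ A_p`, there exists
`β ∈ A_p` of order `(p-1)/2` normalizing `⟨τ⟩` with
`N_{A_p}(⟨τ⟩) = ⟨τ⟩ ⋊ ⟨β⟩`: the normalizer is generated by `τ` and `β`,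
`⟨τ⟩ ∩ ⟨β⟩ = 1`, and `⟨τ⟩` is normal in the normalizer. -/
theorem normalizer_eq_semidirect (p : ℕ) (hp : p.Prime) (hp5 : 5 ≤ p)
    (τ : Equiv.Perm (Fin p)) (hcyc : τ.IsCycle) (hcard : τ.support.card = p)
    (hτA : τ ∈ alternatingGroup (Fin p)) :
    ∃ β : alternatingGroup (Fin p),
      orderOf β = (p - 1) / 2 ∧
      β ∈ Subgroup.normalizer (Subgroup.zpowers (⟨τ, hτA⟩ : alternatingGroup (Fin p))) ∧
      Subgroup.normalizer (Subgroup.zpowers (⟨τ, hτA⟩ : alternatingGroup (Fin p)))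
        = Subgroup.zpowers (⟨τ, hτA⟩ : alternatingGroup (Fin p)) ⊔ Subgroup.zpowers β ∧
      Subgroup.zpowers (⟨τ, hτA⟩ : alternatingGroup (Fin p)) ⊓ Subgroup.zpowers β = ⊥ ∧
      ((Subgroup.zpowers (⟨τ, hτA⟩ : alternatingGroup (Fin p))).subgroupOf
        (Subgroup.normalizer (Subgroup.zpowers (⟨τ, hτA⟩ : alternatingGroup (Fin p))))).Normal := by
  haveI : Fact p.Prime := ⟨hp⟩
  haveI : NeZero p := ⟨hp.ne_zero⟩
  have hppos : 0 < p := hp.pos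
  have hodd : Odd p := hp.odd_of_ne_two (by omega)
  have hpeven : Even (p - 1) := Nat.Odd.sub_odd hodd odd_one
  have hτord : orderOf τ = p := by rw [hcyc.orderOf, hcard]
  have hτp : τ ^ p = 1 := by
    have h := pow_orderOf_eq_one τ
    rwa [hτord] at h
  have hτsupp : τ.support = Finset.univ :=
    Finset.eq_univ_of_card _ (by rw [hcard, Fintype.card_fin])
  set x₀ : Fin p := ⟨0, hppos⟩ with hx₀def
  have hτx₀ : τ x₀ ≠ x₀ := by
    have hm : x₀ ∈ τ.support := by rw [hτsupp]; exact Finset.mem_univ _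
    exact Equiv.Perm.mem_support.mp hm
  -- basic modular rewriting of powers of τ
  have hpowmod : ∀ a b : ℕ, ((a : ZMod p) = (b : ZMod p)) → τ ^ a = τ ^ b := by
    intro a b h
    rw [pow_eq_pow_iff_modEq, hτord]
    exact (ZMod.natCast_eq_natCast_iff _ _ _).mp h
  have hfix : ∀ (σ : Equiv.Perm (Fin p)) (n : ℕ) (y : Fin p), σ y = y → (σ ^ n) y = y := by
    intro σ n y h
    induction n with
    | zero => simp
    | succ n ih => rw [pow_succ, Equiv.Perm.mul_apply, h, ih]
  have hker : ∀ n : ℕ, (τ ^ n) x₀ = x₀ → (n : ZMod p) = 0 := by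
    intro n hn
    by_contra hne
    have h1 : ((n * ((n : ZMod p)⁻¹).val : ℕ) : ZMod p) = ((1 : ℕ) : ZMod p) := by
      push_cast
      rw [ZMod.natCast_val, ZMod.cast_id, mul_inv_cancel₀ hne]
    have h2 : τ ^ (n * ((n : ZMod p)⁻¹).val) = τ ^ 1 := hpowmod _ _ h1
    have h3 : τ x₀ = x₀ := by
      have := hfix (τ ^ n) (((n : ZMod p)⁻¹).val) x₀ hn
      rw [← pow_mul, h2, pow_one] at this
      exact this
    exact hτx₀ h3
  -- the identification e : ZMod p ≃ Fin p
  have hinj : Function.Injective (fun k : ZMod p => (τ ^ k.val) x₀) := by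
    intro k k' h
    simp only at h
    have hle : k'.val ≤ p := le_of_lt (ZMod.val_lt k')
    have h1 : (τ ^ ((p - k'.val) + k.val)) x₀ = x₀ := by
      rw [pow_add, Equiv.Perm.mul_apply, h, ← Equiv.Perm.mul_apply, ← pow_add,
        Nat.sub_add_cancel hle, hτp]
      rfl
    have h2 := hker _ h1
    rw [Nat.cast_add, Nat.cast_sub hle, ZMod.natCast_self, zero_sub,
      ZMod.natCast_val, ZMod.natCast_val, ZMod.cast_id, ZMod.cast_id] at h2
    have : k - k' = 0 := by linear_combination h2
    exact sub_eq_zero.mp this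
  set e : ZMod p ≃ Fin p :=
    Equiv.ofBijective _ ((Fintype.bijective_iff_injective_and_card _).mpr
      ⟨hinj, by simp [ZMod.card]⟩) with hedef
  have he : ∀ k : ZMod p, e k = (τ ^ k.val) x₀ := fun k => rfl
  have hsurj : ∀ y : Fin p, ∃ k, e k = y := fun y => e.surjective y
  have hK1 : ∀ k : ZMod p, τ (e k) = e (k + 1) := by
    intro k
    rw [he, he]
    have h1 : τ ^ (k.val + 1) = τ ^ ((k + 1).val) := by
      apply hpowmod
      push_cast [ZMod.natCast_val, ZMod.cast_id]
      ring
    rw [← h1, pow_succ', Equiv.Perm.mul_apply]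
  have hK3 : ∀ (n : ℕ) (k : ZMod p), (τ ^ n) (e k) = e (k + n) := by
    intro n
    induction n with
    | zero => intro k; simp
    | succ n ih =>
      intro k
      rw [pow_succ, Equiv.Perm.mul_apply, hK1, ih]
      push_cast
      ring_nf
  -- primitive root
  obtain ⟨u, hu⟩ := IsCyclic.exists_generator (α := (ZMod p)ˣ)
  have huord : orderOf u = p - 1 := by
    rw [orderOf_eq_card_of_forall_mem_zpowers hu, Nat.card_eq_fintype_card, ZMod.card_units]
  set a₀ : ZMod p := (u : ZMod p) with ha₀def
  have ha₀ : a₀ ≠ 0 := u.ne_zero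
  have ha₀ord : orderOf a₀ = p - 1 := by rw [ha₀def, orderOf_units, huord]
  have ha₀1 : a₀ ≠ 1 := by
    intro h
    rw [h, orderOf_one] at ha₀ord
    omega
  -- the permutation θ
  set θ : Equiv.Perm (Fin p) := (e.symm.trans (Equiv.mulLeft₀ a₀ ha₀)).trans e with hθdef
  have hθe : ∀ k : ZMod p, θ (e k) = e (a₀ * k) := by
    intro k
    simp [hθdef, Equiv.mulLeft₀]
  have hθpow : ∀ (m : ℕ) (k : ZMod p), (θ ^ m) (e k) = e (a₀ ^ m * k) := by
    intro m
    induction m with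
    | zero => intro k; simp
    | succ m ih =>
      intro k
      rw [pow_succ', Equiv.Perm.mul_apply, ih, hθe, pow_succ']
      ring_nf
  have hθinv : ∀ (m : ℕ) (k : ZMod p), ((θ ^ m)⁻¹) (e k) = e ((a₀⁻¹) ^ m * k) := by
    intro m k
    rw [Equiv.Perm.inv_eq_iff_eq, hθpow, ← mul_assoc, ← mul_pow, mul_inv_cancel₀ ha₀,
      one_pow, one_mul]
  have hconj : ∀ m : ℕ, θ ^ m * τ * (θ ^ m)⁻¹ = τ ^ (a₀ ^ m).val := by
    intro m
    apply Equiv.ext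
    intro y
    obtain ⟨k, rfl⟩ := hsurj y
    rw [Equiv.Perm.mul_apply, Equiv.Perm.mul_apply, hθinv, hK1, hθpow, hK3]
    refine congrArg e ?_
    rw [ZMod.natCast_val, ZMod.cast_id, mul_add, ← mul_assoc, ← mul_pow,
      mul_inv_cancel₀ ha₀, one_pow, one_mul, mul_one, add_comm]
  -- centralizer
  have he0 : e 0 = x₀ := by rw [he]; simp
  have hcent : ∀ g : Equiv.Perm (Fin p), g * τ = τ * g → ∃ j : ℕ, g = τ ^ j := by
    intro g hg
    obtain ⟨j₀, hj₀⟩ := hsurj (g x₀)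
    refine ⟨j₀.val, ?_⟩
    apply Equiv.ext
    intro y
    obtain ⟨k, rfl⟩ := hsurj y
    have hc : g * τ ^ k.val = τ ^ k.val * g := (Commute.pow_right hg k.val)
    calc g (e k) = (g * τ ^ k.val) x₀ := by rw [he, Equiv.Perm.mul_apply]
      _ = (τ ^ k.val) (g x₀) := by rw [hc, Equiv.Perm.mul_apply]
      _ = (τ ^ k.val) (e j₀) := by rw [hj₀]
      _ = e (j₀ + k.val) := hK3 _ _
      _ = e (k + j₀.val) := by
            rw [ZMod.natCast_val, ZMod.natCast_val, ZMod.cast_id, ZMod.cast_id, add_comm]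
      _ = (τ ^ j₀.val) (e k) := (hK3 _ _).symm
  -- θ is an odd permutation
  have hθfix : ∀ k : ZMod p, θ (e k) = e k ↔ k = 0 := by
    intro k
    rw [hθe]
    constructor
    · intro h
      have h2 := e.injective h
      by_contra hk
      have h3 : a₀ * k = 1 * k := by rw [one_mul]; exact h2
      exact ha₀1 (mul_right_cancel₀ hk h3)
    · rintro rfl; simp
  have hθcyc : θ.IsCycle := by
    refine ⟨e 1, ?_, ?_⟩
    · rw [hθe]
      intro h
      exact ha₀1 (by simpa using e.injective h)
    · intro y hy
      obtain ⟨k, rfl⟩ := hsurj y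
      have hk : k ≠ 0 := by
        intro h
        exact hy ((hθfix k).mpr h)
      obtain ⟨m, hm⟩ := (Submonoid.mem_powers_iff _ _).mp
        (mem_powers_iff_mem_zpowers.mpr (hu (Units.mk0 k hk)))
      refine ⟨(m : ℤ), ?_⟩
      rw [zpow_natCast, hθpow, mul_one]
      refine congrArg e ?_
      have : ((u ^ m : (ZMod p)ˣ) : ZMod p) = ((Units.mk0 k hk : (ZMod p)ˣ) : ZMod p) := by
        rw [hm]
      simpa [ha₀def] using this
  have hθsuppcard : θ.support.card = p - 1 := by
    have hs : θ.support = {e 0}ᶜ := by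
      ext y
      obtain ⟨k, rfl⟩ := hsurj y
      simp only [Equiv.Perm.mem_support, Finset.mem_compl, Finset.mem_singleton,
        ne_eq, e.injective.eq_iff]
      exact not_congr (hθfix k)
    rw [hs, Finset.card_compl, Finset.card_singleton, Fintype.card_fin]
  have hθsign : Equiv.Perm.sign θ = -1 := by
    rw [hθcyc.sign, hθsuppcard, hpeven.neg_one_pow]
  have hθord : orderOf θ = p - 1 := by
    rw [← ha₀ord]
    rw [orderOf_eq_orderOf_iff]
    intro n
    constructor
    · intro h
      have := hθpow n 1
      rw [h, mul_one] at this
      have h2 := e.injective this.symm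
      simpa using h2
    · intro h
      apply Equiv.ext
      intro y
      obtain ⟨k, rfl⟩ := hsurj y
      rw [hθpow, h, one_mul]
      rfl
  have hβsign : Equiv.Perm.sign (θ ^ 2) = 1 := by
    rw [map_pow, hθsign]; norm_num
  have hβordperm : orderOf (θ ^ 2) = (p - 1) / 2 := by
    rw [orderOf_pow, hθord]
    congr 1
    rw [Nat.gcd_comm]
    exact Nat.gcd_eq_left hpeven.two_dvd
  -- key characterization
  have hchar : ∀ σ : Equiv.Perm (Fin p), Equiv.Perm.sign σ = 1 →
      (∃ n : ℕ, σ * τ * σ⁻¹ = τ ^ n) → ∃ t j : ℕ, σ = (θ ^ 2) ^ t * τ ^ j := by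
    rintro σ hσ ⟨n, hn⟩
    have hτ1 : τ ≠ 1 := by
      intro h
      rw [h] at hcard
      simp at hcard
      omega
    have hn0 : (n : ZMod p) ≠ 0 := by
      intro h
      have hdvd : p ∣ n := (ZMod.natCast_eq_zero_iff _ _).mp h
      have h1 : τ ^ n = 1 := orderOf_dvd_iff_pow_eq_one.mp (by rw [hτord]; exact hdvd)
      rw [h1] at hn
      apply hτ1
      have h2 : τ = σ⁻¹ * (σ * τ * σ⁻¹) * σ := by group
      rw [hn] at h2
      simpa [mul_assoc] using h2
    obtain ⟨m, hm⟩ := (Submonoid.mem_powers_iff _ _).mp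
      (mem_powers_iff_mem_zpowers.mpr (hu (Units.mk0 _ hn0)))
    have ham : a₀ ^ m = (n : ZMod p) := by
      have : ((u ^ m : (ZMod p)ˣ) : ZMod p) = ((Units.mk0 _ hn0 : (ZMod p)ˣ) : ZMod p) := by
        rw [hm]
      simpa [ha₀def] using this
    have h1 : τ ^ n = τ ^ (a₀ ^ m).val := by
      apply hpowmod
      rw [ZMod.natCast_val, ZMod.cast_id, ham]
    have h2 : σ * τ * σ⁻¹ = θ ^ m * τ * (θ ^ m)⁻¹ := by rw [hn, h1, hconj]
    have h3 : ((θ ^ m)⁻¹ * σ) * τ = τ * ((θ ^ m)⁻¹ * σ) := by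
      calc ((θ ^ m)⁻¹ * σ) * τ = (θ ^ m)⁻¹ * (σ * τ * σ⁻¹) * σ := by group
        _ = (θ ^ m)⁻¹ * (θ ^ m * τ * (θ ^ m)⁻¹) * σ := by rw [h2]
        _ = τ * ((θ ^ m)⁻¹ * σ) := by group
    obtain ⟨j, hj⟩ := hcent _ h3
    have hσm : σ = θ ^ m * τ ^ j := by rw [← hj]; group
    have hsgn : ((-1 : ℤˣ)) ^ m = 1 := by
      have h4 := hσ
      rw [hσm, map_mul, map_pow, map_pow, hθsign,
        Equiv.Perm.mem_alternatingGroup.mp hτA, one_pow, mul_one] at h4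
      exact h4
    have hme : Even m := by
      rcases Nat.even_or_odd m with h | h
      · exact h
      · rw [h.neg_one_pow] at hsgn
        exact absurd hsgn (by decide)
    obtain ⟨t, ht⟩ := hme
    refine ⟨t, j, ?_⟩
    rw [hσm, ht, ← pow_mul, two_mul]
  -- now lift everything to the alternating group
  set τA : alternatingGroup (Fin p) := ⟨τ, hτA⟩ with hτAdef
  set βA : alternatingGroup (Fin p) :=
    ⟨θ ^ 2, Equiv.Perm.mem_alternatingGroup.mpr hβsign⟩ with hβAdef
  have hτAord : orderOf τA = p := by
    have h := orderOf_injective (alternatingGroup (Fin p)).subtype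
      (Subgroup.subtype_injective _) τA
    rw [← h]
    exact hτord
  have hβAord : orderOf βA = (p - 1) / 2 := by
    have h := orderOf_injective (alternatingGroup (Fin p)).subtype
      (Subgroup.subtype_injective _) βA
    rw [← h]
    exact hβordperm
  have hbA_conj : βA * τA * βA⁻¹ = τA ^ (a₀ ^ 2).val := by
    apply Subtype.ext
    push_cast
    exact hconj 2
  have hβmem : βA ∈ Subgroup.normalizer (Subgroup.zpowers τA : Set _) := by
    apply Subgroup.mem_normalizer_fintype
    intro x hx
    obtain ⟨z, rfl⟩ := hx
    show βA * τA ^ z * βA⁻¹ ∈ Subgroup.zpowers τA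
    rw [← conj_zpow, hbA_conj, ← zpow_natCast, ← zpow_mul]
    exact Subgroup.zpow_mem _ (Subgroup.mem_zpowers τA) _
  have hsup : Subgroup.normalizer (Subgroup.zpowers τA : Set _)
      = Subgroup.zpowers τA ⊔ Subgroup.zpowers βA := by
    apply le_antisymm
    · intro x hx
      have hxτ : x * τA * x⁻¹ ∈ Subgroup.zpowers τA :=
        (Subgroup.mem_normalizer_iff.mp hx τA).mp (Subgroup.mem_zpowers τA)
      obtain ⟨z, hz⟩ := hxτ
      have hz' : (x : Equiv.Perm (Fin p)) * τ * (x : Equiv.Perm (Fin p))⁻¹ = τ ^ z := by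
        have h := congrArg (Subtype.val) hz
        push_cast at h
        exact h.symm
      have hzmod : τ ^ z = τ ^ ((z % (p : ℤ)).toNat) := by
        have hτpz : τ ^ (p : ℤ) = 1 := by rw [zpow_natCast]; exact hτp
        conv_lhs => rw [← Int.emod_add_mul_ediv z (p : ℤ)]
        rw [zpow_add, zpow_mul, hτpz, one_zpow, mul_one, ← zpow_natCast,
          Int.toNat_of_nonneg (Int.emod_nonneg z (by exact_mod_cast hp.ne_zero))]
      obtain ⟨t, j, htj⟩ := hchar (x : Equiv.Perm (Fin p))
        (Equiv.Perm.mem_alternatingGroup.mp x.2)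
        ⟨(z % (p : ℤ)).toNat, by rw [hz', hzmod]⟩
      have hx' : x = βA ^ t * τA ^ j := by
        apply Subtype.ext
        push_cast
        exact htj
      rw [hx']
      exact Subgroup.mul_mem _
        (Subgroup.mem_sup_right (Subgroup.pow_mem _ (Subgroup.mem_zpowers βA) t))
        (Subgroup.mem_sup_left (Subgroup.pow_mem _ (Subgroup.mem_zpowers τA) j))
    · exact sup_le Subgroup.le_normalizer (Subgroup.zpowers_le.mpr hβmem)
  have hinf : Subgroup.zpowers τA ⊓ Subgroup.zpowers βA = ⊥ := by
    rw [eq_bot_iff]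
    intro x hx
    rw [Subgroup.mem_inf] at hx
    obtain ⟨h1, h2⟩ := hx
    have d1 : orderOf x ∣ p := by
      have h := orderOf_dvd_of_mem_zpowers h1
      rwa [hτAord] at h
    have d2 : orderOf x ∣ (p - 1) / 2 := by
      have h := orderOf_dvd_of_mem_zpowers h2
      rwa [hβAord] at h
    have hone : orderOf x = 1 := by
      rcases (Nat.Prime.eq_one_or_self_of_dvd hp _ d1) with h | h
      · exact h
      · exfalso
        rw [h] at d2
        have := Nat.le_of_dvd (by omega) d2
        omega
    rw [Subgroup.mem_bot]
    exact orderOf_eq_one_iff.mp hone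
  exact ⟨βA, hβAord, hβmem, hsup, hinf, Subgroup.normal_in_normalizer⟩
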